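/- The number of projective F_27-rational points on the smooth plane curve x¹³ = y¹³ + z¹³ is 208. -/

import Mathlib

open Finset Polynomial Projectivization

local notation "K" => GaloisField 3 3

noncomputable instance : Fintype (GaloisField 3 3) := Fintype.ofFinite _
noncomputable instance : DecidableEq (GaloisField 3 3) := Classical.decEq _

private lemma cardK : Fintype.card (GaloisField 3 3) = 27 := by
  have := GaloisField.card 3 3 (by norm_num)
  rw [Nat.card_eq_fintype_card] at this
  simpa using this

private lemma cardKu : Fintype.card (GaloisField 3 3)ˣ = 26 := by
  rw [Fintype.card_units, cardK]

private lemma h3 : (3 : K) = 0 := by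
  have := CharP.cast_eq_zero K 3
  simpa using this

private lemma hne : (1 : K) ≠ -1 := by
  intro h
  have : (1 : K) = 0 := by linear_combination h3 - h
  exact one_ne_zero this

private lemma h11 : (1 : K) + 1 = -1 := by linear_combination h3

private lemma hm11 : (-1 : K) + -1 = 1 := by linear_combination -h3

private lemma exists_gen : ∃ g : Kˣ, orderOf g = 26 := by
  obtain ⟨g, hg⟩ := IsCyclic.exists_generator (α := Kˣ)
  exact ⟨g, by rw [orderOf_eq_card_of_forall_mem_zpowers hg, Nat.card_eq_fintype_card, cardKu]⟩

private lemma exists_prim : ∃ ζ : K, IsPrimitiveRoot ζ 13 := by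
  obtain ⟨g, hg⟩ := exists_gen
  refine ⟨((g ^ 2 : Kˣ) : K), IsPrimitiveRoot.coe_units_iff.mpr ?_⟩
  have : orderOf (g ^ 2) = 13 := by rw [orderOf_pow, hg]; decide
  rw [← this]
  exact IsPrimitiveRoot.orderOf _

private lemma exists_neg_one_pow : ∃ b : K, b ^ 13 = -1 := by
  obtain ⟨g, hg⟩ := exists_gen
  refine ⟨(g : K), ?_⟩
  have h26 : (g : K) ^ 26 = 1 := by
    have := pow_orderOf_eq_one g
    rw [hg] at this
    have h := congrArg (Units.val) this
    simpa using h
  have hsq : ((g : K) ^ 13) * ((g : K) ^ 13) = 1 := by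
    rw [← pow_add]; simpa using h26
  rcases mul_self_eq_one_iff.mp hsq with h | h
  · exfalso
    have h1 : g ^ 13 = 1 := Units.ext (by push_cast; exact h)
    have := orderOf_dvd_of_pow_eq_one h1
    rw [hg] at this
    omega
  · exact h

private noncomputable def A (a : K) : ℕ := (univ.filter fun x : K => x ^ 13 = a).card

private lemma A_zero : A 0 = 1 := by
  have : (univ.filter fun x : K => x ^ 13 = 0) = {0} := by
    ext x
    simp [pow_eq_zero_iff (n := 13) (by norm_num)]
  rw [A, this, card_singleton]

private lemma A_of_pow {a : K} (ha : a ≠ 0) (hpow : ∃ b : K, b ^ 13 = a) : A a = 13 := by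
  obtain ⟨ζ, hζ⟩ := exists_prim
  have hnodup := hζ.nthRoots_nodup ha
  have hfin : (univ.filter fun x : K => x ^ 13 = a) = (nthRoots 13 a).toFinset := by
    ext x
    simp [Multiset.mem_toFinset, mem_nthRoots (by norm_num : 0 < 13)]
  rw [A, hfin, Multiset.toFinset_card_of_nodup hnodup, hζ.card_nthRoots, if_pos hpow]

private lemma A_one : A 1 = 13 := A_of_pow one_ne_zero ⟨1, one_pow 13⟩

private lemma A_negone : A (-1) = 13 :=
  A_of_pow (neg_ne_zero.mpr one_ne_zero) exists_neg_one_pow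

private lemma pow13_trichotomy (x : K) : x ^ 13 = 0 ∨ x ^ 13 = 1 ∨ x ^ 13 = -1 := by
  rcases eq_or_ne x 0 with rfl | hx
  · left; simp
  · right
    have h26 : x ^ 26 = 1 := by
      have := FiniteField.pow_card_sub_one_eq_one x hx
      rwa [cardK] at this
    have : (x ^ 13) * (x ^ 13) = 1 := by rw [← pow_add]; simpa using h26
    exact mul_self_eq_one_iff.mp this

private def P (v : K × K × K) : Prop := v.1 ^ 13 = v.2.1 ^ 13 + v.2.2 ^ 13

private noncomputable instance : DecidablePred P := Classical.decPred _

private noncomputable def T : Finset (K × K × K) := univ.filter P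

private lemma fiber_eq (s t : K) :
    (T.filter fun v => (v.2.1 ^ 13, v.2.2 ^ 13) = (s, t)) =
      (univ.filter fun x : K => x ^ 13 = s + t) ×ˢ
        ((univ.filter fun x : K => x ^ 13 = s) ×ˢ (univ.filter fun x : K => x ^ 13 = t)) := by
  ext ⟨x, y, z⟩
  simp only [T, P, mem_filter, mem_product, mem_univ, true_and, Prod.mk.injEq]
  constructor
  · rintro ⟨hP, hy, hz⟩
    exact ⟨by rw [hP, hy, hz], hy, hz⟩
  · rintro ⟨hx, hy, hz⟩
    exact ⟨by rw [hx, hy, hz], hy, hz⟩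

private lemma T_card : T.card = 5409 := by
  have key := Finset.card_eq_sum_card_fiberwise
    (s := T) (t := ({0,1,-1} : Finset K) ×ˢ ({0,1,-1} : Finset K))
    (f := fun v => (v.2.1 ^ 13, v.2.2 ^ 13)) ?_
  · rw [key, Finset.sum_product]
    have h10 : (1 : K) ≠ 0 := one_ne_zero
    have hm0 : (-1 : K) ≠ 0 := by simp
    have expand : ∀ g : K → ℕ, ∑ s ∈ ({0,1,-1} : Finset K), g s = g 0 + g 1 + g (-1) := by
      intro g
      rw [show ({0,1,-1} : Finset K) = insert 0 (insert 1 {-1}) from rfl]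
      rw [Finset.sum_insert (by simp [h10.symm, hm0.symm]), Finset.sum_insert (by simp [hne]),
        Finset.sum_singleton]
      ring
    rw [expand]
    simp only [expand]
    have hfc : ∀ s t : K, (T.filter fun v => (v.2.1 ^ 13, v.2.2 ^ 13) = (s, t)).card
        = A (s + t) * (A s * A t) := by
      intro s t
      rw [fiber_eq s t, Finset.card_product, Finset.card_product]
      rfl
    simp only [hfc]
    rw [zero_add, zero_add, zero_add, add_zero, add_zero, h11, add_neg_cancel, neg_add_cancel, hm11]
    rw [A_zero, A_one, A_negone]
  · intro v _
    have h1 := pow13_trichotomy v.2.1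
    have h2 := pow13_trichotomy v.2.2
    simp only [Finset.mem_coe, mem_product, mem_insert, mem_singleton]
    tauto

private lemma card_triples : Nat.card {v : K × K × K // v ≠ 0 ∧ P v} = 5408 := by
  rw [Nat.card_eq_fintype_card, Fintype.card_subtype]
  have hfilter : (univ.filter fun v : K × K × K => v ≠ 0 ∧ P v) = T.erase 0 := by
    ext v
    simp [T, and_comm]
  have h0T : (0 : K × K × K) ∈ T := by
    simp [T, P]
  rw [hfilter, Finset.card_erase_of_mem h0T, T_card]

private def Q (v : Fin 3 → K) : Prop := v 0 ^ 13 = v 1 ^ 13 + v 2 ^ 13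

private def b3 : (Fin 3 → K) ≃ K × K × K where
  toFun v := (v 0, v 1, v 2)
  invFun p := ![p.1, p.2.1, p.2.2]
  left_inv v := by funext i; fin_cases i <;> rfl
  right_inv p := rfl

private lemma card_vectors : Nat.card {v : Fin 3 → K // v ≠ 0 ∧ Q v} = 5408 := by
  rw [← card_triples]
  apply Nat.card_congr
  refine Equiv.subtypeEquiv b3 fun v => ?_
  have hz : b3 v = 0 ↔ v = 0 := by
    rw [show (0 : K × K × K) = b3 0 from rfl]
    exact b3.apply_eq_iff_eq
  constructor
  · rintro ⟨hv0, hvQ⟩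
    exact ⟨fun h => hv0 (hz.mp h), hvQ⟩
  · rintro ⟨hv0, hvP⟩
    exact ⟨fun h => hv0 (hz.mpr h), hvP⟩

private lemma usmul_ne_zero (c : Kˣ) (w : Fin 3 → K) (hw : w ≠ 0) : c • w ≠ 0 := by
  rw [Units.smul_def]; exact smul_ne_zero c.ne_zero hw

private lemma hQ_smul (c : Kˣ) (v : Fin 3 → K) : Q (c • v) ↔ Q v := by
  simp only [Q, Pi.smul_apply, Units.smul_def, smul_eq_mul, mul_pow, ← mul_add]
  exact mul_right_inj' (pow_ne_zero _ c.ne_zero)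

private noncomputable def E : {v : Fin 3 → K // v ≠ 0 ∧ Q v} ≃
    {P : Projectivization K (Fin 3 → K) //
      (P.rep 0) ^ 13 = (P.rep 1) ^ 13 + (P.rep 2) ^ 13} × Kˣ where
  toFun := fun ⟨v, hv0, hvQ⟩ =>
    (⟨Projectivization.mk K v hv0, by
      obtain ⟨u, hu⟩ := (exists_smul_eq_mk_rep K v hv0)
      have : Q ((Projectivization.mk K v hv0).rep) := by
        rw [← hu]; exact (hQ_smul u v).mpr hvQ
      exact this⟩,
      (exists_smul_eq_mk_rep K v hv0).choose)
  invFun := fun ⟨⟨P, hP⟩, c⟩ =>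
    ⟨c⁻¹ • P.rep, by
      constructor
      · exact usmul_ne_zero _ _ P.rep_nonzero
      · exact (hQ_smul c⁻¹ P.rep).mpr hP⟩
  left_inv := by
    rintro ⟨v, hv0, hvQ⟩
    have hspec := (exists_smul_eq_mk_rep K v hv0).choose_spec
    ext : 1
    simp only
    exact inv_smul_eq_iff.mpr hspec.symm
  right_inv := by
    rintro ⟨⟨P, hP⟩, c⟩
    have hv0 : c⁻¹ • P.rep ≠ 0 := usmul_ne_zero _ _ P.rep_nonzero
    have hmk : Projectivization.mk K (c⁻¹ • P.rep) hv0 = P := by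
      conv_rhs => rw [← P.mk_rep]
      rw [Projectivization.mk_eq_mk_iff]
      exact ⟨c⁻¹, rfl⟩
    have hspec := (exists_smul_eq_mk_rep K (c⁻¹ • P.rep) hv0).choose_spec
    set u := (exists_smul_eq_mk_rep K (c⁻¹ • P.rep) hv0).choose with hu
    have hrep : (Projectivization.mk K (c⁻¹ • P.rep) hv0).rep = P.rep := by rw [hmk]
    rw [hrep] at hspec
    have huc : u = c := by
      have h1 : ((u * c⁻¹ : Kˣ) : K) • P.rep = (1 : K) • P.rep := by
        rw [one_smul, ← Units.smul_def, mul_smul]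
        exact hspec
      have h2 : ((u * c⁻¹ : Kˣ) : K) = 1 := by
        by_contra hne
        have := sub_smul ((u * c⁻¹ : Kˣ) : K) 1 P.rep
        rw [h1] at this
        have hz : (((u * c⁻¹ : Kˣ) : K) - 1) • P.rep = 0 := by rw [this, sub_self]
        rcases smul_eq_zero.mp hz with h | h
        · exact hne (by linear_combination h)
        · exact P.rep_nonzero h
      have : (u * c⁻¹ : Kˣ) = 1 := Units.ext (by simpa using h2)
      calc u = u * c⁻¹ * c := by group
      _ = c := by rw [this, one_mul]
    refine Prod.ext ?_ ?_
    · simp only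
      exact Subtype.ext hmk
    · simpa using huc

theorem stmt15 :
    Nat.card {P : Projectivization (GaloisField 3 3) (Fin 3 → GaloisField 3 3) //
      (P.rep 0) ^ 13 = (P.rep 1) ^ 13 + (P.rep 2) ^ 13} = 208 := by
  have h1 := card_vectors
  rw [Nat.card_congr E, Nat.card_prod] at h1
  have h2 : Nat.card (Kˣ) = 26 := by rw [Nat.card_eq_fintype_card, cardKu]
  rw [h2] at h1
  omega
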